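/- Let B₁ be a rare basis in ℝⁿ with the following property: for every k ∈ ℕ there exist increasing integer sequences (s_{1,m})_{m=0}^k,…,(s_{n,m})_{m=0}^k such that for every n-tuple of integers (m₁,…,mₙ) with k ≥ m₁ ≥ m₂ ≥ ⋯ ≥ mₙ ≥ 0 the interval [0,2^{s_{1,m₁}}]×[0,2^{s_{2,m₂}}]×⋯×[0,2^{s_{n,mₙ}}] belongs to B₁. Let B₂ be a translation-invariant collection of one-dimensional intervals whose lengths form an infinite set of dyadic numbers. Then the product basis B₁×B₂ = {J₁×J₂ : J₁ ∈ B₁, J₂ ∈ B₂} in ℝ^{n+1} is Ω_k-complete for every k ≥ n+1, where Ω_k is the set of all (n+1)-tuples (m₁,…,mₙ,m_{n+1}) ∈ Ω_{n+1,k} with k ≥ m₁ ≥ m₂ ≥ ⋯ ≥ mₙ ≥ 1; moreover card(Ω_k) ≥ cₙ·kⁿ for a constant cₙ > 0 depending only on n. -/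

import Mathlib

open MeasureTheory Set
open scoped ENNReal

noncomputable section

/-- An axis-parallel interval (box) in `ℝⁿ`, given by its left and right endpoints. -/
structure BoxInterval (n : ℕ) where
  a : Fin n → ℝ
  b : Fin n → ℝ
  hab : ∀ j, a j < b j

namespace BoxInterval

/-- The underlying set of a box. -/
def toSet {n : ℕ} (R : BoxInterval n) : Set (Fin n → ℝ) :=
  Set.univ.pi fun j => Set.Icc (R.a j) (R.b j)

/-- The side length of a box in direction `j`. -/
def side {n : ℕ} (R : BoxInterval n) (j : Fin n) : ℝ := R.b j - R.a j

/-- Translation of a box by a vector `v`. -/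
def translate {n : ℕ} (R : BoxInterval n) (v : Fin n → ℝ) : BoxInterval n where
  a := fun j => R.a j + v j
  b := fun j => R.b j + v j
  hab := fun j => by have := R.hab j; linarith

end BoxInterval

/-- A rare basis in `ℝⁿ`: a nonempty translation-invariant collection of intervals. -/
def IsRareBasis {n : ℕ} (B : Set (BoxInterval n)) : Prop :=
  B.Nonempty ∧ ∀ R ∈ B, ∀ v : Fin n → ℝ, R.translate v ∈ B

/-- The geometric maximal operator `M_B` associated with a collection `B` of boxes:
`M_B f (x) = sup { (1/|R|) ∫_R |f| : x ∈ R ∈ B }`. -/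
def maxOp {n : ℕ} (B : Set (BoxInterval n)) (f : (Fin n → ℝ) → ℝ)
    (x : Fin n → ℝ) : ℝ≥0∞ :=
  ⨆ (R : BoxInterval n) (_ : R ∈ B) (_ : x ∈ R.toSet),
    (∫⁻ y in R.toSet, ENNReal.ofReal |f y| ∂volume) / volume R.toSet

/-- The spectrum `W_B ⊂ ℤⁿ` of a collection of boxes: all tuples
`(⌈log₂ |R₁|⌉, …, ⌈log₂ |Rₙ|⌉)` over boxes `R₁ × ⋯ × Rₙ ∈ B`. -/
def spectrumB {n : ℕ} (B : Set (BoxInterval n)) : Set (Fin n → ℤ) :=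
  {w | ∃ R ∈ B, ∀ j, w j = ⌈Real.logb 2 (R.side j)⌉}

/-- The slice `W_t` of `W ⊂ ℤ^{k+1}` over `t ∈ ℤᵏ`. -/
def sliceZ {k : ℕ} (W : Set (Fin (k + 1) → ℤ)) (t : Fin k → ℤ) : Set ℤ :=
  {τ | Fin.snoc t τ ∈ W}

/-- `W` is a net for `S` in `ℤ^{k+1}`: every slice of `W` is a one-dimensional
net for the corresponding slice of `S`. -/
def IsNetMulti {k : ℕ} (W S : Set (Fin (k + 1) → ℤ)) : Prop :=
  ∀ t : Fin k → ℤ, ∃ N : ℕ, ∀ τ ∈ sliceZ S t, ∃ w ∈ sliceZ W t, |τ - w| ≤ (N : ℤ)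

/-- Projection of `W ⊂ ℤⁿ` onto the first `k` coordinates. -/
def projZ {n : ℕ} (k : ℕ) (hk : k ≤ n) (W : Set (Fin n → ℤ)) : Set (Fin k → ℤ) :=
  (fun w (i : Fin k) => w (Fin.castLE hk i)) '' W

/-- `W ⊂ ℤⁿ` is dense in `S₁ × ⋯ × Sₙ`: for each `k`, `π_{k+1}(W)` is a net for
`π_k(W) × S_{k+1}`. -/
def IsDenseIn {n : ℕ} (W : Set (Fin n → ℤ)) (S : Fin n → Set ℤ) : Prop :=
  ∀ k : Fin n,
    IsNetMulti (projZ (k.val + 1) k.isLt W)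
      {v : Fin (k.val + 1) → ℤ |
        Fin.init v ∈ projZ k.val (Nat.le_of_lt k.isLt) W ∧ v (Fin.last k.val) ∈ S k}

/-- `Ω_{n,k}`: the set of `n`-tuples of positive integers summing to `k`. -/
def OmegaNK (n k : ℕ) : Set (Fin n → ℕ) :=
  {m | (∀ j, 1 ≤ m j) ∧ ∑ j, m j = k}

/-- The smallest box concentric with `R`, containing `R`, with dyadic side lengths. -/
def dyadicHull {n : ℕ} (R : BoxInterval n) : BoxInterval n where
  a := fun j => (R.a j + R.b j) / 2 - (2:ℝ) ^ ⌈Real.logb 2 (R.side j)⌉ / 2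
  b := fun j => (R.a j + R.b j) / 2 + (2:ℝ) ^ ⌈Real.logb 2 (R.side j)⌉ / 2
  hab := fun j => by
    have h : (0:ℝ) < (2:ℝ) ^ ⌈Real.logb 2 (R.side j)⌉ := by positivity
    linarith

/-- The dyadic skeleton `B_d` of a collection `B`. -/
def dyadicSkeleton {n : ℕ} (B : Set (BoxInterval n)) : Set (BoxInterval n) :=
  {Rd | ∃ R ∈ B, Rd = dyadicHull R}

/-- `B` is `Ω`-complete (for `Ω ⊆ Ω_{n,k}`). -/
def OmegaComplete {n : ℕ} (B : Set (BoxInterval n)) (k : ℕ) (Ω : Set (Fin n → ℕ)) : Prop :=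
  ∃ s : Fin n → ℕ → ℤ,
    (∀ j, ∀ m, m < k → s j m < s j (m + 1)) ∧
    ∀ m ∈ Ω, ∃ R ∈ dyadicSkeleton B, ∀ j,
      R.side j ∈ Set.Ioc ((2:ℝ) ^ s j (m j - 1)) ((2:ℝ) ^ s j (m j))

/-- Product of an `n`-dimensional box and a one-dimensional box. -/
def prodBox {n : ℕ} (J1 : BoxInterval n) (J2 : BoxInterval 1) : BoxInterval (n + 1) where
  a := Fin.snoc J1.a (J2.a 0)
  b := Fin.snoc J1.b (J2.b 0)
  hab := fun j => by
    induction j using Fin.lastCases with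
    | last => simpa using J2.hab 0
    | cast i => simpa using J1.hab i

/-- The product basis `B₁ × B₂`. -/
def prodBasis {n : ℕ} (B1 : Set (BoxInterval n)) (B2 : Set (BoxInterval 1)) :
    Set (BoxInterval (n + 1)) :=
  {R | ∃ J1 ∈ B1, ∃ J2 ∈ B2, R = prodBox J1 J2}

/-- The (is)-property of a rare basis in `ℝ²`. -/
def ISProperty (B : Set (BoxInterval 2)) : Prop :=
  ∀ k : ℕ, ∃ R : Fin (k + 1) → BoxInterval 2,
    (∀ i, R i ∈ B) ∧
    (∀ i, (R i).a = fun _ => 0) ∧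
    (∀ i, ∃ pq : Fin 2 → ℤ, ∀ l, (R i).b l = (2:ℝ) ^ pq l) ∧
    (∀ i j, i ≠ j → ∀ v : Fin 2 → ℝ, ¬ ((R i).translate v).toSet ⊆ (R j).toSet) ∧
    (∀ i j, ∃ Q ∈ B, Q.toSet = (R i).toSet ∩ (R j).toSet)

lemma logb_two_zpow' (t : ℤ) : Real.logb 2 ((2:ℝ)^t) = t := by
  rw [Real.logb, Real.log_zpow]; field_simp

lemma dyadicHull_side' {n : ℕ} (R : BoxInterval n) (j : Fin n) :
    (dyadicHull R).side j = (2:ℝ) ^ ⌈Real.logb 2 (R.side j)⌉ := by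
  simp only [dyadicHull, BoxInterval.side]; ring

lemma prodBox_side_castSucc' {n : ℕ} (J1 : BoxInterval n) (J2 : BoxInterval 1) (i : Fin n) :
    (prodBox J1 J2).side i.castSucc = J1.side i := by
  simp [prodBox, BoxInterval.side]

lemma prodBox_side_last' {n : ℕ} (J1 : BoxInterval n) (J2 : BoxInterval 1) :
    (prodBox J1 J2).side (Fin.last n) = J2.side 0 := by
  simp [prodBox, BoxInterval.side]

/-- Application VIII (completeness part): if `B₁ ⊂ ℝⁿ` contains all boxes
`[0,2^{s_{1,m₁}}] × ⋯ × [0,2^{s_{n,mₙ}}]` for decreasing tuples `k ≥ m₁ ≥ ⋯ ≥ mₙ ≥ 0`, then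
`B₁ × B₂` is `Ω_k`-complete for every `k ≥ n + 1`, where `Ω_k` consists of the tuples of
`Ω_{n+1,k}` with `k ≥ m₁ ≥ ⋯ ≥ mₙ ≥ 1`; moreover `card Ω_k ≥ cₙ kⁿ`. -/
theorem statement18 (n : ℕ) (hn : 1 ≤ n) (B1 : Set (BoxInterval n)) (hB1 : IsRareBasis B1)
    (hprop : ∀ k : ℕ, ∃ s : Fin n → ℕ → ℤ,
      (∀ j, ∀ m, m < k → s j m < s j (m + 1)) ∧
      ∀ m : Fin n → ℕ, (∀ j, m j ≤ k) → (∀ i j : Fin n, i ≤ j → m j ≤ m i) →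
        (⟨fun _ => 0, fun j => (2:ℝ) ^ s j (m j),
          fun j => by positivity⟩ : BoxInterval n) ∈ B1)
    (B2 : Set (BoxInterval 1))
    (hB2trans : ∀ I ∈ B2, ∀ v : Fin 1 → ℝ, I.translate v ∈ B2)
    (hB2inf : {l : ℝ | ∃ I ∈ B2, I.side 0 = l}.Infinite)
    (hB2dyadic : {l : ℝ | ∃ I ∈ B2, I.side 0 = l} ⊆ {x | ∃ s : ℤ, x = (2:ℝ) ^ s}) :
    (∀ k : ℕ, n + 1 ≤ k → OmegaComplete (prodBasis B1 B2) k
      {m : Fin (n + 1) → ℕ | m ∈ OmegaNK (n + 1) k ∧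
        (∀ i j : Fin n, i ≤ j → m j.castSucc ≤ m i.castSucc) ∧
        (∀ i : Fin n, 1 ≤ m i.castSucc) ∧ (∀ i : Fin n, m i.castSucc ≤ k)}) ∧
    ∃ c : ℝ, 0 < c ∧ ∀ k : ℕ, n + 1 ≤ k →
      c * (k : ℝ) ^ n ≤
        (({m : Fin (n + 1) → ℕ | m ∈ OmegaNK (n + 1) k ∧
        (∀ i j : Fin n, i ≤ j → m j.castSucc ≤ m i.castSucc) ∧
        (∀ i : Fin n, 1 ≤ m i.castSucc) ∧ (∀ i : Fin n, m i.castSucc ≤ k)}).ncard : ℝ) := by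
  constructor
  · -- completeness part
    intro k hk
    obtain ⟨s1, hs1mono, hs1mem⟩ := hprop k
    have hE : {t : ℤ | (2:ℝ)^t ∈ {l : ℝ | ∃ I ∈ B2, I.side 0 = l}}.Infinite := by
      apply Set.Infinite.of_image (fun t : ℤ => (2:ℝ)^t)
      apply Set.Infinite.mono _ hB2inf
      intro l hl
      obtain ⟨t, ht⟩ := hB2dyadic hl
      exact ⟨t, by rw [Set.mem_setOf_eq, ← ht]; exact hl, ht.symm⟩
    obtain ⟨T, hTsub, hTcard⟩ := hE.exists_subset_card_eq (k+1)
    set eo := T.orderEmbOfFin hTcard with heo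
    refine ⟨Fin.snoc (fun i : Fin n => s1 i) (fun m : ℕ => (eo ⟨min m k, by omega⟩ : ℤ)),
      ?_, ?_⟩
    · intro j
      induction j using Fin.lastCases with
      | last =>
        intro m hm
        simp only [Fin.snoc_last]
        exact eo.strictMono (by rw [Fin.mk_lt_mk]; omega)
      | cast i =>
        intro m hm
        simpa only [Fin.snoc_castSucc] using hs1mono i m hm
    · intro m hm
      obtain ⟨⟨hm1, hmsum⟩, hdec, hge1, hlek⟩ := hm
      have hμk : m (Fin.last n) ≤ k := by
        rw [← hmsum]
        exact Finset.single_le_sum (fun i _ => Nat.zero_le _) (Finset.mem_univ _)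
      have hμ1 : 1 ≤ m (Fin.last n) := hm1 _
      have hJ1 := hs1mem (fun i => m i.castSucc) (fun j => hlek j) hdec
      have hmemL : (2:ℝ) ^ (eo ⟨m (Fin.last n), by omega⟩ : ℤ) ∈
          {l : ℝ | ∃ I ∈ B2, I.side 0 = l} :=
        hTsub (Finset.orderEmbOfFin_mem T hTcard _)
      obtain ⟨I, hIB2, hIside⟩ := hmemL
      refine ⟨dyadicHull (prodBox ⟨fun _ => 0,
        fun j => (2:ℝ) ^ s1 j (m j.castSucc), fun j => by positivity⟩ I),
        ⟨prodBox _ I, ⟨_, hJ1, I, hIB2, rfl⟩, rfl⟩, ?_⟩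
      intro j
      induction j using Fin.lastCases with
      | last =>
        rw [dyadicHull_side', prodBox_side_last', hIside, logb_two_zpow', Int.ceil_intCast,
          Set.mem_Ioc]
        simp only [Fin.snoc_last]
        have hmin1 : min (m (Fin.last n) - 1) k = m (Fin.last n) - 1 :=
          Nat.min_eq_left (by omega)
        have hmin2 : min (m (Fin.last n)) k = m (Fin.last n) := Nat.min_eq_left hμk
        constructor
        · apply zpow_lt_zpow_right₀ one_lt_two
          have : ((⟨min (m (Fin.last n) - 1) k, by omega⟩ : Fin (k+1)) <
              ⟨m (Fin.last n), by omega⟩) := by rw [Fin.mk_lt_mk]; omega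
          exact_mod_cast eo.strictMono this
        · apply le_of_eq
          congr 2
          exact Fin.ext (by simp [hmin2])
      | cast i =>
        have hside : (prodBox (⟨fun _ => 0,
            fun j => (2:ℝ) ^ s1 j (m j.castSucc), fun j => by positivity⟩ : BoxInterval n)
            I).side i.castSucc = (2:ℝ) ^ s1 i (m i.castSucc) := by
          rw [prodBox_side_castSucc']
          simp [BoxInterval.side]
        rw [dyadicHull_side', hside, logb_two_zpow', Int.ceil_intCast, Set.mem_Ioc]
        simp only [Fin.snoc_castSucc]
        constructor
        · apply zpow_lt_zpow_right₀ one_lt_two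
          have h1 : m i.castSucc - 1 < k := by have := hlek i; have := hge1 i; omega
          have h2 := hs1mono i (m i.castSucc - 1) h1
          have h3 : m i.castSucc - 1 + 1 = m i.castSucc := by have := hge1 i; omega
          rwa [h3] at h2
        · exact le_rfl
  · -- cardinality part
    have hn0 : (0:ℝ) < 2 * (n:ℝ)^2 := by
      have h1 : (1:ℝ) ≤ (n:ℝ) := by exact_mod_cast hn
      nlinarith
    refine ⟨((2 * (n:ℝ)^2)⁻¹)^n, by positivity, ?_⟩
    intro k hk
    set Ω := {m : Fin (n + 1) → ℕ | m ∈ OmegaNK (n + 1) k ∧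
        (∀ i j : Fin n, i ≤ j → m j.castSucc ≤ m i.castSucc) ∧
        (∀ i : Fin n, 1 ≤ m i.castSucc) ∧ (∀ i : Fin n, m i.castSucc ≤ k)} with hΩdef
    have hΩfin : Ω.Finite := by
      apply Set.Finite.subset (Set.finite_Icc (fun _ : Fin (n+1) => 0) (fun _ => k))
      rintro m ⟨⟨hm1, hmsum⟩, -, -, -⟩
      refine Set.mem_Icc.mpr ⟨fun j => Nat.zero_le _, fun j => ?_⟩
      rw [← hmsum]
      exact Finset.single_le_sum (fun i _ => Nat.zero_le _) (Finset.mem_univ _)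
    rcases Nat.lt_or_ge k (2 * n^2) with hcase | hcase
    · -- small k
      have hne : Ω.Nonempty := by
        refine ⟨Fin.snoc (fun _ => 1) (k - n), ⟨⟨?_, ?_⟩, ?_, ?_, ?_⟩⟩
        · intro j
          induction j using Fin.lastCases with
          | last => simp only [Fin.snoc_last]; omega
          | cast i => simp [Fin.snoc_castSucc]
        · rw [Fin.sum_univ_castSucc]
          simp only [Fin.snoc_last, Fin.snoc_castSucc, Finset.sum_const, Finset.card_univ,
            Fintype.card_fin, smul_eq_mul, mul_one]
          omega
        · intro i j hij; simp [Fin.snoc_castSucc]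
        · intro i; simp [Fin.snoc_castSucc]
        · intro i; simp only [Fin.snoc_castSucc]; omega
      have h1 : 1 ≤ Ω.ncard := (Set.ncard_pos hΩfin).mpr hne
      calc ((2*(n:ℝ)^2)⁻¹)^n * (k:ℝ)^n
          ≤ ((2*(n:ℝ)^2)⁻¹)^n * (2*(n:ℝ)^2)^n := by
            apply mul_le_mul_of_nonneg_left _ (by positivity)
            apply pow_le_pow_left₀ (by positivity)
            have : (k:ℝ) ≤ ((2*n^2 : ℕ) : ℝ) := by exact_mod_cast hcase.le
            calc (k:ℝ) ≤ ((2*n^2 : ℕ) : ℝ) := this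
              _ = 2*(n:ℝ)^2 := by push_cast; ring
        _ = 1 := by rw [← mul_pow, inv_mul_cancel₀ (ne_of_gt hn0), one_pow]
        _ ≤ (Ω.ncard : ℝ) := by exact_mod_cast h1
    · -- large k
      set a := (k-1)/(n^2) with ha
      have hn2 : 0 < n^2 := by positivity
      have hdm := Nat.div_add_mod (k-1) (n^2)
      have hmod := Nat.mod_lt (k-1) hn2
      have hsk : a * n^2 ≤ k - 1 := Nat.div_mul_le_self (k-1) (n^2)
      have hsk' : n^2 * a ≤ k - 1 := by rwa [mul_comm] at hsk
      have hka : k ≤ 2 * (n^2 * a) := by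
        rw [← ha] at hdm
        omega
      -- the injection
      set g : (Fin n → Fin a) → Fin n → ℕ :=
        fun x i => a * (n - 1 - (i:ℕ)) + (x i : ℕ) + 1 with hg
      set F : (Fin n → Fin a) → Fin (n+1) → ℕ :=
        fun x => Fin.snoc (g x) (k - ∑ i : Fin n, g x i) with hF
      have hterm : ∀ x : Fin n → Fin a, ∀ i : Fin n, g x i ≤ a * n := by
        intro x i
        simp only [hg]
        have h1 : a * (n - 1 - (i:ℕ)) + a ≤ a * n := by
          rw [← Nat.mul_succ]
          exact Nat.mul_le_mul_left a (by omega)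
        have h2 : (x i : ℕ) + 1 ≤ a := (x i).isLt
        omega
      have hSb : ∀ x : Fin n → Fin a, (∑ i : Fin n, g x i) ≤ k - 1 := by
        intro x
        calc (∑ i : Fin n, g x i) ≤ ∑ _i : Fin n, a * n :=
              Finset.sum_le_sum (fun i _ => hterm x i)
          _ = n * (a * n) := by
              rw [Finset.sum_const, Finset.card_univ, Fintype.card_fin, smul_eq_mul]
          _ = n^2 * a := by ring
          _ ≤ k - 1 := hsk'
      have hinj : Function.Injective F := by
        intro x y hxy
        funext i
        have h1 := congrFun hxy i.castSucc
        simp only [hF, Fin.snoc_castSucc, hg] at h1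
        exact Fin.ext (by omega)
      have hsub : Set.range F ⊆ Ω := by
        rintro _ ⟨x, rfl⟩
        have hS := hSb x
        have hgle : ∀ i : Fin n, g x i ≤ ∑ j : Fin n, g x j := fun i =>
          Finset.single_le_sum (fun j _ => Nat.zero_le _) (Finset.mem_univ i)
        refine ⟨⟨?_, ?_⟩, ?_, ?_, ?_⟩
        · intro j
          induction j using Fin.lastCases with
          | last => simp only [hF, Fin.snoc_last]; omega
          | cast i => simp only [hF, Fin.snoc_castSucc, hg]; omega
        · rw [Fin.sum_univ_castSucc]
          simp only [hF, Fin.snoc_last, Fin.snoc_castSucc]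
          omega
        · intro i j hij
          simp only [hF, Fin.snoc_castSucc, hg]
          rcases eq_or_lt_of_le hij with h | h
          · rw [h]
          · have hij' : (i:ℕ) < (j:ℕ) := h
            have hjn : (j:ℕ) < n := j.isLt
            have h1 : a * (n - 1 - (j:ℕ)) + a ≤ a * (n - 1 - (i:ℕ)) := by
              rw [← Nat.mul_succ]
              exact Nat.mul_le_mul_left a (by omega)
            have h2 : (x j : ℕ) + 1 ≤ a := (x j).isLt
            omega
        · intro i
          simp only [hF, Fin.snoc_castSucc, hg]
          omega
        · intro i
          simp only [hF, Fin.snoc_castSucc]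
          have := hgle i
          omega
      have hcard : a^n ≤ Ω.ncard := by
        have h1 : (Set.range F).ncard = a^n := by
          rw [← Nat.card_coe_set_eq, Nat.card_range_of_injective hinj,
            Nat.card_eq_fintype_card, Fintype.card_fun, Fintype.card_fin, Fintype.card_fin]
        calc a^n = (Set.range F).ncard := h1.symm
          _ ≤ Ω.ncard := Set.ncard_le_ncard hsub hΩfin
      have hka' : (k:ℝ) ≤ 2*(n:ℝ)^2 * (a:ℝ) := by
        have : ((k:ℕ):ℝ) ≤ ((2*(n^2*a) : ℕ):ℝ) := by exact_mod_cast hka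
        calc (k:ℝ) ≤ ((2*(n^2*a) : ℕ):ℝ) := this
          _ = 2*(n:ℝ)^2 * (a:ℝ) := by push_cast; ring
      calc ((2*(n:ℝ)^2)⁻¹)^n * (k:ℝ)^n = ((2*(n:ℝ)^2)⁻¹ * k)^n := by rw [mul_pow]
        _ ≤ (a:ℝ)^n := by
            apply pow_le_pow_left₀ (by positivity)
            exact (inv_mul_le_iff₀ hn0).mpr hka'
        _ = ((a^n : ℕ):ℝ) := by push_cast; ring
        _ ≤ (Ω.ncard : ℝ) := by exact_mod_cast hcard


end
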